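/- For every natural number m ≥ 1, the number of palindromic compositions of m all of whose parts are odd equals fib(m/2) if m is even, and equals fib((m+3)/2) if m is odd (with the convention fib(0) = 0, fib(1) = fib(2) = 1). -/

import Mathlib

open List

private def Sset (n : ℕ) := {l : List ℕ // l.sum = n ∧ ∀ a ∈ l, Odd a}
private def Pset (m : ℕ) := {l : List ℕ // l.sum = m ∧ l.reverse = l ∧ ∀ a ∈ l, Odd a}
private def Tset (t : ℕ) := {l : List ℕ // l.sum ≤ t ∧ ∀ a ∈ l, Odd a}

private lemma odd_sum_mod (l : List ℕ) (h : ∀ a ∈ l, Odd a) : l.sum % 2 = l.length % 2 := by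
  induction l with
  | nil => rfl
  | cons a t ih =>
    have ha := h a (mem_cons_self)
    have ht := ih (fun b hb => h b (mem_cons_of_mem _ hb))
    obtain ⟨k, hk⟩ := ha
    simp only [sum_cons, length_cons]
    omega

private lemma eq_nil_of_sum_zero {l : List ℕ} (h : ∀ a ∈ l, Odd a) (hs : l.sum = 0) : l = [] := by
  cases l with
  | nil => rfl
  | cons a t =>
    have ha := (h a (mem_cons_self)).pos
    simp only [sum_cons] at hs
    omega

private lemma eq_of_sum_one {l : List ℕ} (h : ∀ a ∈ l, Odd a) (hs : l.sum = 1) : l = [1] := by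
  cases l with
  | nil => simp at hs
  | cons a t =>
    have ha := (h a (mem_cons_self)).pos
    simp only [sum_cons] at hs
    have ha1 : a = 1 := by omega
    have ht : t = [] := eq_nil_of_sum_zero (fun b hb => h b (mem_cons_of_mem _ hb)) (by omega)
    rw [ha1, ht]

private lemma eq_of_sum_two {l : List ℕ} (h : ∀ a ∈ l, Odd a) (hs : l.sum = 2) : l = [1, 1] := by
  cases l with
  | nil => simp at hs
  | cons a t =>
    obtain ⟨k, hk⟩ := h a (mem_cons_self)
    simp only [sum_cons] at hs
    have ha1 : a = 1 := by omega
    have ht : t = [1] := eq_of_sum_one (fun b hb => h b (mem_cons_of_mem _ hb)) (by omega)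
    rw [ha1, ht]

private lemma even_half (l : List ℕ) (k : ℕ) (hs : l.sum = 2*k) (hr : l.reverse = l)
    (ho : ∀ a ∈ l, Odd a) :
    (l.take (l.length/2)).reverse = l.drop (l.length/2) ∧ (l.take (l.length/2)).sum = k := by
  have hm := odd_sum_mod l ho
  have hlen : l.length % 2 = 0 := by omega
  have h1 : (l.take (l.length/2)).reverse = l.drop (l.length/2) := by
    rw [reverse_take, hr]
    congr 1
    omega
  refine ⟨h1, ?_⟩
  have h3 : (l.take (l.length/2)).sum + (l.drop (l.length/2)).sum = 2*k := by
    rw [← sum_append, take_append_drop, hs]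
  rw [← h1, sum_reverse] at h3
  omega

private def evenEquiv (k : ℕ) : Pset (2*k) ≃ Sset k where
  toFun x := ⟨x.1.take (x.1.length/2),
    (even_half x.1 k x.2.1 x.2.2.1 x.2.2.2).2,
    fun a ha => x.2.2.2 a (take_subset _ _ ha)⟩
  invFun w := ⟨w.1 ++ w.1.reverse,
    by rw [sum_append, sum_reverse, w.2.1]; ring,
    by rw [reverse_append, reverse_reverse],
    by
      intro a ha
      rcases mem_append.1 ha with h | h
      exacts [w.2.2 a h, w.2.2 a (mem_reverse.1 h)]⟩
  left_inv x := by
    apply Subtype.ext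
    have h1 := (even_half x.1 k x.2.1 x.2.2.1 x.2.2.2).1
    dsimp only
    rw [h1, take_append_drop]
  right_inv w := by
    apply Subtype.ext
    dsimp only
    have hl : (w.1 ++ w.1.reverse).length / 2 = w.1.length := by
      rw [length_append, length_reverse]; omega
    rw [hl, take_left]

private lemma odd_half (l : List ℕ) (t : ℕ) (hs : l.sum = 2*t+1) (hr : l.reverse = l)
    (ho : ∀ a ∈ l, Odd a) :
    (l.take (l.length/2)).sum ≤ t ∧
    l = l.take (l.length/2) ++ (2*t+1 - 2*(l.take (l.length/2)).sum) ::
      (l.take (l.length/2)).reverse := by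
  have hm := odd_sum_mod l ho
  have hlen : l.length % 2 = 1 := by omega
  set h := l.length / 2 with hh
  have h1 : (l.take h).reverse = l.drop (h+1) := by
    rw [reverse_take, hr]; congr 1; omega
  have hd : l.drop h ≠ [] := by
    intro hcon
    have hc := congrArg List.length hcon
    rw [length_drop] at hc
    simp only [List.length_nil] at hc
    omega
  have h2 : l.drop h = (l.drop h).head! :: l.drop (h+1) := by
    conv_lhs => rw [← cons_head!_tail hd, tail_drop]
  set x := (l.drop h).head! with hx
  have hxl : x ∈ l := drop_subset _ _ (head!_mem_self hd)
  obtain ⟨y, hy⟩ := ho x hxl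
  have h3 : (l.take h).sum + (l.drop h).sum = 2*t+1 := by
    rw [← sum_append, take_append_drop, hs]
  rw [h2, sum_cons, ← h1, sum_reverse] at h3
  have hxval : x = 2*t+1 - 2*(l.take h).sum := by omega
  refine ⟨by omega, ?_⟩
  conv_lhs => rw [← take_append_drop h l, h2, ← h1]
  rw [hxval]

private def oddEquiv (t : ℕ) : Pset (2*t+1) ≃ Tset t where
  toFun x := ⟨x.1.take (x.1.length/2),
    (odd_half x.1 t x.2.1 x.2.2.1 x.2.2.2).1,
    fun a ha => x.2.2.2 a (take_subset _ _ ha)⟩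
  invFun w := ⟨w.1 ++ (2*t+1 - 2*w.1.sum) :: w.1.reverse,
    by rw [sum_append, sum_cons, sum_reverse]; have := w.2.1; omega,
    by simp,
    by
      intro a ha
      rcases mem_append.1 ha with h | h
      · exact w.2.2 a h
      rcases mem_cons.1 h with h | h
      · have := w.2.1
        exact h ▸ ⟨t - w.1.sum, by omega⟩
      · exact w.2.2 a (mem_reverse.1 h)⟩
  left_inv x := by
    apply Subtype.ext
    dsimp only
    exact ((odd_half x.1 t x.2.1 x.2.2.1 x.2.2.2).2).symm
  right_inv w := by
    apply Subtype.ext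
    dsimp only
    have hl : (w.1 ++ (2*t+1 - 2*w.1.sum) :: w.1.reverse).length / 2 = w.1.length := by
      rw [length_append, length_cons, length_reverse]; omega
    rw [hl, take_left]

private def srec (n : ℕ) (hn : 1 ≤ n) : Sset (n+2) ≃ Sset (n+1) ⊕ Sset n where
  toFun x :=
    if hx : x.1.head! = 1 then
      Sum.inl ⟨x.1.tail, by
        have hne : x.1 ≠ [] := by
          intro hc
          have := x.2.1
          rw [hc] at this
          simp at this
        have hs := x.2.1
        rw [← cons_head!_tail hne, sum_cons] at hs
        omega,
        fun a ha => x.2.2 a (mem_of_mem_tail ha)⟩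
    else
      Sum.inr ⟨(x.1.head! - 2) :: x.1.tail, by
        have hne : x.1 ≠ [] := by
          intro hc
          have := x.2.1
          rw [hc] at this
          simp at this
        have hs := x.2.1
        rw [← cons_head!_tail hne, sum_cons] at hs
        obtain ⟨y, hy⟩ := x.2.2 _ (head!_mem_self hne)
        rw [sum_cons]
        omega, by
        intro a ha
        have hne : x.1 ≠ [] := by
          intro hc
          have := x.2.1
          rw [hc] at this
          simp at this
        rcases mem_cons.1 ha with h | h
        · obtain ⟨y, hy⟩ := x.2.2 _ (head!_mem_self hne)
          have hy1 : y ≥ 1 := by omega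
          exact h ▸ ⟨y - 1, by omega⟩
        · exact x.2.2 a (mem_of_mem_tail h)⟩
  invFun w :=
    match w with
    | Sum.inl w => ⟨1 :: w.1, by rw [sum_cons, w.2.1]; omega, by
        intro a ha
        rcases mem_cons.1 ha with h | h
        · exact h ▸ odd_one
        · exact w.2.2 a h⟩
    | Sum.inr w => ⟨(w.1.head! + 2) :: w.1.tail, by
        have hne : w.1 ≠ [] := by
          intro hc
          have := w.2.1
          rw [hc] at this
          simp at this
          omega
        have hs := w.2.1
        rw [← cons_head!_tail hne, sum_cons] at hs
        rw [sum_cons]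
        omega, by
        intro a ha
        have hne : w.1 ≠ [] := by
          intro hc
          have := w.2.1
          rw [hc] at this
          simp at this
          omega
        rcases mem_cons.1 ha with h | h
        · obtain ⟨y, hy⟩ := w.2.2 _ (head!_mem_self hne)
          exact h ▸ ⟨y + 1, by omega⟩
        · exact w.2.2 a (mem_of_mem_tail h)⟩
  left_inv x := by
    have hne : x.1 ≠ [] := by
      intro hc
      have := x.2.1
      rw [hc] at this
      simp at this
    dsimp only
    split_ifs with hx
    · apply Subtype.ext
      dsimp only
      rw [← hx]
      exact cons_head!_tail hne
    · apply Subtype.ext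
      obtain ⟨y, hy⟩ := x.2.2 _ (head!_mem_self hne)
      dsimp only
      simp only [head!_cons, tail_cons]
      rw [show x.1.head! - 2 + 2 = x.1.head! by omega]
      exact cons_head!_tail hne
  right_inv w := by
    rcases w with w | w
    · dsimp only
      rw [dif_pos (show (1 :: w.1).head! = 1 from rfl)]
      rfl
    · have hne : w.1 ≠ [] := by
        intro hc
        have := w.2.1
        rw [hc] at this
        simp at this
        omega
      obtain ⟨y, hy⟩ := w.2.2 _ (head!_mem_self hne)
      dsimp only
      rw [dif_neg (by simp only [head!_cons]; omega)]
      simp only [head!_cons, tail_cons, Nat.add_sub_cancel]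
      congr 1
      apply Subtype.ext
      exact cons_head!_tail hne

private def trec (t : ℕ) : Tset (t+1) ≃ Tset t ⊕ Sset (t+1) where
  toFun x :=
    if hx : x.1.sum ≤ t then Sum.inl ⟨x.1, hx, x.2.2⟩
    else Sum.inr ⟨x.1, by have := x.2.1; omega, x.2.2⟩
  invFun w :=
    match w with
    | Sum.inl w => ⟨w.1, le_trans w.2.1 (Nat.le_succ t), w.2.2⟩
    | Sum.inr w => ⟨w.1, le_of_eq w.2.1, w.2.2⟩
  left_inv x := by
    dsimp only
    split_ifs <;> rfl
  right_inv w := by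
    rcases w with w | w
    · dsimp only
      rw [dif_pos w.2.1]
      rfl
    · dsimp only
      rw [dif_neg (by have := w.2.1; omega)]
      rfl

private def compEquiv (m : ℕ) :
    {c : Composition m // c.blocks.reverse = c.blocks ∧ ∀ a ∈ c.blocks, Odd a} ≃ Pset m where
  toFun c := ⟨c.1.blocks, c.1.blocks_sum, c.2.1, c.2.2⟩
  invFun l := ⟨⟨l.1, fun {i} hi => (l.2.2.2 i hi).pos, l.2.1⟩, l.2.2.1, l.2.2.2⟩
  left_inv c := rfl
  right_inv l := rfl

private def compEquivS (n : ℕ) :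
    {c : Composition n // ∀ a ∈ c.blocks, Odd a} ≃ Sset n where
  toFun c := ⟨c.1.blocks, c.1.blocks_sum, c.2⟩
  invFun l := ⟨⟨l.1, fun {i} hi => (l.2.2 i hi).pos, l.2.1⟩, l.2.2⟩
  left_inv c := rfl
  right_inv l := rfl

private instance (n : ℕ) : Finite (Sset n) := Finite.of_equiv _ (compEquivS n)
private instance (m : ℕ) : Finite (Pset m) := Finite.of_equiv _ (compEquiv m)
private instance (t : ℕ) : Finite (Tset t) := Finite.of_equiv _ (oddEquiv t)

private lemma cardS1 : Nat.card (Sset 1) = 1 := by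
  haveI : Unique (Sset 1) :=
    { default := ⟨[1], by simp, by simp⟩
      uniq := fun x => Subtype.ext (eq_of_sum_one x.2.2 x.2.1) }
  exact Nat.card_unique

private lemma cardS2 : Nat.card (Sset 2) = 1 := by
  haveI : Unique (Sset 2) :=
    { default := ⟨[1, 1], by simp, by simp⟩
      uniq := fun x => Subtype.ext (eq_of_sum_two x.2.2 x.2.1) }
  exact Nat.card_unique

private lemma cardT0 : Nat.card (Tset 0) = 1 := by
  haveI : Unique (Tset 0) :=
    { default := ⟨[], by simp, by simp⟩
      uniq := fun x => Subtype.ext (eq_nil_of_sum_zero x.2.2 (by have := x.2.1; omega)) }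
  exact Nat.card_unique

private lemma fib_step (k : ℕ) : Nat.fib (k+2) + Nat.fib (k+1) = Nat.fib (k+3) := by
  rw [show k+3 = (k+1)+2 by omega, Nat.fib_add_two (n := k+1),
    show (k+1)+1 = k+2 by omega]
  exact Nat.add_comm _ _

private lemma cardS : ∀ n, 1 ≤ n → Nat.card (Sset n) = Nat.fib n := by
  intro n
  induction n using Nat.strong_induction_on with
  | _ n ih =>
    match n with
    | 0 => exact fun h => absurd h (by omega)
    | 1 => exact fun _ => cardS1
    | 2 => exact fun _ => cardS2
    | (k+3) =>
      intro _
      rw [Nat.card_congr (srec (k+1) (by omega)), Nat.card_sum,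
        ih (k+2) (by omega) (by omega), ih (k+1) (by omega) (by omega)]
      exact fib_step k

private lemma cardT : ∀ t, Nat.card (Tset t) = Nat.fib (t+2) := by
  intro t
  induction t with
  | zero => exact cardT0
  | succ k ih =>
    rw [Nat.card_congr (trec k), Nat.card_sum, ih, cardS (k+1) (by omega)]
    exact fib_step k

/-- **Palindromic odd compositions are counted by Fibonacci numbers** (Aguiar–Lauve,
Section 5.4): for every `m ≥ 1`, the number of palindromic compositions of `m` all of whose
parts are odd equals `fib (m/2)` for even `m` and `fib ((m+3)/2)` for odd `m`. -/
theorem card_palindromic_odd_compositions (m : ℕ) (hm : 1 ≤ m) :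
    (Even m →
      Nat.card {c : Composition m // c.blocks.reverse = c.blocks ∧ ∀ a ∈ c.blocks, Odd a} =
        Nat.fib (m / 2)) ∧
    (Odd m →
      Nat.card {c : Composition m // c.blocks.reverse = c.blocks ∧ ∀ a ∈ c.blocks, Odd a} =
        Nat.fib ((m + 3) / 2)) := by
  constructor
  · intro he
    obtain ⟨k, hk⟩ := he
    subst hk
    rw [show k + k = 2 * k by ring] at hm ⊢
    rw [Nat.card_congr ((compEquiv (2*k)).trans (evenEquiv k)),
      cardS k (by omega), show 2*k/2 = k by omega]
  · intro ho
    obtain ⟨t, ht⟩ := ho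
    subst ht
    rw [Nat.card_congr ((compEquiv (2*t+1)).trans (oddEquiv t)), cardT t,
      show (2*t+1+3)/2 = t+2 by omega]
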